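/- The Fibonacci sequence is cobweb-admissible: for all natural numbers n and k with k ≤ n, the product (∏_{i=1}^{k} fib(i)) · (∏_{i=1}^{n-k} fib(i)) divides ∏_{i=1}^{n} fib(i); equivalently, every Fibonomial coefficient binom(n,k)_F = F_n!/(F_k!·F_{n-k}!) is a natural number. -/

import Mathlib

lemma fib_prod_succ (m : ℕ) (hm : 1 ≤ m) :
    ∏ i ∈ Finset.Icc 1 m, Nat.fib i
      = (∏ i ∈ Finset.Icc 1 (m - 1), Nat.fib i) * Nat.fib m := by
  have h : m = (m - 1) + 1 := by omega
  rw [h, Finset.prod_Icc_succ_top (by omega)]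
  simp

/-- The Fibonacci sequence is cobweb-admissible: for all `k ≤ n`,
`(∏_{i=1}^{k} fib i) * (∏_{i=1}^{n-k} fib i)` divides `∏_{i=1}^{n} fib i`. -/
theorem fib_cobweb_admissible :
    ∀ n k : ℕ, k ≤ n →
      (∏ i ∈ Finset.Icc 1 k, Nat.fib i) * (∏ i ∈ Finset.Icc 1 (n - k), Nat.fib i) ∣
        ∏ i ∈ Finset.Icc 1 n, Nat.fib i := by
  intro n
  induction n using Nat.strong_induction_on with
  | _ n ih =>
    intro k hk
    rcases Nat.eq_zero_or_pos k with rfl | hk0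
    · simp
    rcases eq_or_lt_of_le hk with rfl | hkn
    · simp [Nat.sub_self]
    have hn : 1 ≤ n := le_trans hk0 hk
    have hnk : 1 ≤ n - k := by omega
    have hfib : Nat.fib n
        = Nat.fib (k - 1) * Nat.fib (n - k) + Nat.fib k * Nat.fib (n - k + 1) := by
      have h := Nat.fib_add (k - 1) (n - k)
      have h1 : (k - 1) + (n - k) + 1 = n := by omega
      have h2 : (k - 1) + 1 = k := by omega
      rw [h1, h2] at h
      exact h
    rw [fib_prod_succ n hn, hfib, Nat.mul_add]
    apply dvd_add
    · -- uses IH at (n-1, k): P k * P(n-1-k) ∣ P(n-1)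
      have ihA := ih (n - 1) (by omega) k (by omega)
      have he : (n - 1) - k = (n - k) - 1 := by omega
      rw [he] at ihA
      have h1 : (∏ i ∈ Finset.Icc 1 k, Nat.fib i) * (∏ i ∈ Finset.Icc 1 (n - k), Nat.fib i)
          ∣ (∏ i ∈ Finset.Icc 1 (n - 1), Nat.fib i) * Nat.fib (n - k) := by
        rw [fib_prod_succ (n - k) hnk, ← mul_assoc]
        exact mul_dvd_mul_right ihA _
      exact h1.trans ⟨Nat.fib (k - 1), by ring⟩
    · -- uses IH at (n-1, k-1): P(k-1) * P(n-k) ∣ P(n-1)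
      have ihB := ih (n - 1) (by omega) (k - 1) (by omega)
      have he : (n - 1) - (k - 1) = n - k := by omega
      rw [he] at ihB
      have h1 : (∏ i ∈ Finset.Icc 1 k, Nat.fib i) * (∏ i ∈ Finset.Icc 1 (n - k), Nat.fib i)
          ∣ (∏ i ∈ Finset.Icc 1 (n - 1), Nat.fib i) * Nat.fib k := by
        rw [fib_prod_succ k hk0, mul_comm (∏ i ∈ Finset.Icc 1 (k-1), Nat.fib i) (Nat.fib k),
          mul_assoc]
        exact mul_dvd_mul_left _ ihB |>.trans ⟨1, by ring⟩
      exact h1.trans ⟨Nat.fib (n - k + 1), by ring⟩
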